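/- Let G be an AH-algebra and let g ∈ G with 0 ≤ g. Then there exists a unique element g^(1/2) ∈ G such that 0 ≤ g^(1/2) and (g^(1/2))² = g; moreover, g^(1/2) ∈ CC(g). -/

import Mathlib

/-- An e-ring `(R,E)`: an associative ring `R` with unity together with a set `E ⊆ R`
of effects, satisfying the Foulis axioms.  `E⁺` is realized as the additive submonoid
closure of `E` (the set of all finite sums of effects). -/
structure ERing (R : Type*) [Ring R] where
  E : Set R
  zero_mem : (0 : R) ∈ E
  one_mem : (1 : R) ∈ E
  compl_mem : ∀ e ∈ E, 1 - e ∈ E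
  epos_i : ∀ a ∈ AddSubmonoid.closure E, -a ∈ AddSubmonoid.closure E → a = 0
  epos_ii : ∀ a ∈ AddSubmonoid.closure E, 1 - a ∈ AddSubmonoid.closure E → a ∈ E
  epos_iii : ∀ a ∈ AddSubmonoid.closure E, ∀ b ∈ AddSubmonoid.closure E,
    a * b = b * a → a * b ∈ AddSubmonoid.closure E
  epos_iv : ∀ a ∈ AddSubmonoid.closure E, ∀ b ∈ AddSubmonoid.closure E,
    a * b * a ∈ AddSubmonoid.closure E
  epos_v : ∀ a ∈ AddSubmonoid.closure E, ∀ b ∈ AddSubmonoid.closure E,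
    a * b * a = 0 → a * b = 0 ∧ b * a = 0
  epos_vi : ∀ a ∈ AddSubmonoid.closure E, ∀ b ∈ AddSubmonoid.closure E,
    (a - b) ^ 2 ∈ AddSubmonoid.closure E
  zero_ne_one : (0 : R) ≠ 1

namespace ERing

variable {R : Type*} [Ring R] (er : ERing R)

/-- `E⁺`, the set of all finite sums of effects; the positive cone of the directed group. -/
def Epos : Set R := (AddSubmonoid.closure er.E : Set R)

/-- The directed group `G = E⁺ - E⁺` of the e-ring. -/
def G : Set R := {g | ∃ a ∈ er.Epos, ∃ b ∈ er.Epos, g = a - b}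

/-- The partial order on the directed group: `g ≤ h` iff `h - g ∈ E⁺`. -/
def le (g h : R) : Prop := h - g ∈ er.Epos

/-- The set of projections `P = {p ∈ G : p = p²}`. -/
def P : Set R := {p | p ∈ er.G ∧ p = p ^ 2}

/-- The commutant in `G` of a subset `A ⊆ G`. -/
def commutant (A : Set R) : Set R := {g | g ∈ er.G ∧ ∀ a ∈ A, g * a = a * g}

/-- The bicommutant in `G` of a subset `A ⊆ G`. -/
def CC (A : Set R) : Set R := er.commutant (er.commutant A)

/-- `s` is the supremum of `A` within the subset `S` (w.r.t. the e-ring order). -/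
def IsSupIn (S A : Set R) (s : R) : Prop :=
  s ∈ S ∧ (∀ a ∈ A, er.le a s) ∧ ∀ b ∈ S, (∀ a ∈ A, er.le a b) → er.le s b

/-- `s` is the infimum of `A` within the subset `S` (w.r.t. the e-ring order). -/
def IsInfIn (S A : Set R) (s : R) : Prop :=
  s ∈ S ∧ (∀ a ∈ A, er.le s a) ∧ ∀ b ∈ S, (∀ a ∈ A, er.le b a) → er.le b s

/-- Quadratic annihilation property. -/
def HasQA : Prop := ∀ g ∈ er.G, ∀ h ∈ er.G, g * h ^ 2 * g = 0 → g * h = 0 ∧ h * g = 0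

/-- Commutative Vigier property: every ascending sequence of pairwise commuting elements
of `G` bounded above in `G` has a supremum in `G` which double commutes with the sequence. -/
def HasCV : Prop :=
  ∀ g : ℕ → R, (∀ n, g n ∈ er.G) → (∀ n, er.le (g n) (g (n + 1))) →
    (∀ m n, g m * g n = g n * g m) → (∃ b ∈ er.G, ∀ n, er.le (g n) b) →
    ∃ s, er.IsSupIn er.G (Set.range g) s ∧ s ∈ er.CC (Set.range g)

/-- `G` is an abstract Hermitian (AH) algebra: there is a semitransparent effect `½`,
`G` has quadratic annihilation, and `G` has the commutative Vigier property. -/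
def IsAH : Prop := (∃ h ∈ er.E, h + h = 1) ∧ er.HasQA ∧ er.HasCV

end ERing

section Helpers

variable {R : Type*} [Ring R] (er : ERing R)

namespace ERing

lemma epos_zero : (0:R) ∈ er.Epos := AddSubmonoid.zero_mem _

lemma epos_add {a b : R} (ha : a ∈ er.Epos) (hb : b ∈ er.Epos) : a + b ∈ er.Epos :=
  AddSubmonoid.add_mem _ ha hb

lemma epos_of_E {a : R} (h : a ∈ er.E) : a ∈ er.Epos := AddSubmonoid.subset_closure h

lemma epos_one : (1:R) ∈ er.Epos := er.epos_of_E er.one_mem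

lemma epos_natCast (n : ℕ) : (n:R) ∈ er.Epos := by
  induction n with
  | zero => simpa using er.epos_zero
  | succ k ih => push_cast; exact er.epos_add ih er.epos_one

lemma G_of_epos {a : R} (h : a ∈ er.Epos) : a ∈ er.G :=
  ⟨a, h, 0, er.epos_zero, by abel⟩

lemma G_zero : (0:R) ∈ er.G := er.G_of_epos er.epos_zero

lemma G_one : (1:R) ∈ er.G := er.G_of_epos er.epos_one

lemma G_add {a b : R} (ha : a ∈ er.G) (hb : b ∈ er.G) : a + b ∈ er.G := by
  obtain ⟨x, hx, y, hy, rfl⟩ := ha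
  obtain ⟨z, hz, w, hw, rfl⟩ := hb
  exact ⟨x + z, er.epos_add hx hz, y + w, er.epos_add hy hw, by abel⟩

lemma G_neg {a : R} (ha : a ∈ er.G) : -a ∈ er.G := by
  obtain ⟨x, hx, y, hy, rfl⟩ := ha
  exact ⟨y, hy, x, hx, by abel⟩

lemma G_sub {a b : R} (ha : a ∈ er.G) (hb : b ∈ er.G) : a - b ∈ er.G := by
  have := er.G_add ha (er.G_neg hb); simpa [sub_eq_add_neg] using this

lemma epos_sq {x : R} (h : x ∈ er.G) : x^2 ∈ er.Epos := by
  obtain ⟨a, ha, b, hb, rfl⟩ := h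
  exact er.epos_vi a ha b hb

lemma epos_mul {a b : R} (ha : a ∈ er.Epos) (hb : b ∈ er.Epos) (h : a * b = b * a) :
    a * b ∈ er.Epos := er.epos_iii a ha b hb h

lemma eq_zero_of_neg_epos {a : R} (ha : a ∈ er.Epos) (hb : -a ∈ er.Epos) : a = 0 :=
  er.epos_i a ha hb

lemma le_refl (a : R) : er.le a a := by simpa [ERing.le] using er.epos_zero

lemma le_of_epos {a b : R} (h : b - a ∈ er.Epos) : er.le a b := h

lemma epos_of_le {a b : R} (h : er.le a b) : b - a ∈ er.Epos := h

lemma le_zero_iff {a : R} : er.le 0 a ↔ a ∈ er.Epos := by simp [ERing.le]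

end ERing

end Helpers
section Helpers2

namespace ERing

variable {R : Type*} [Ring R] (er : ERing R)

lemma eq_zero_of_sq_eq_zero (hQA : er.HasQA) {x : R} (hx : x ∈ er.G) (h : x^2 = 0) :
    x = 0 := by
  have := (hQA 1 er.G_one x hx (by simp [h])).1
  simpa using this

lemma eq_zero_of_double (hQA : er.HasQA) {x : R} (hx : x ∈ er.G) (h : x + x = 0) :
    x = 0 := by
  have hsq : x^2 ∈ er.Epos := er.epos_sq hx
  have h2 : x^2 + x^2 = 0 := by
    have hx0 : (x + x) * x = 0 := by rw [h]; simp
    calc x^2 + x^2 = (x + x) * x := by rw [add_mul, sq]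
    _ = 0 := hx0
  have hneg : -(x^2) ∈ er.Epos := by
    rw [neg_eq_of_add_eq_zero_left h2]; exact hsq
  exact er.eq_zero_of_sq_eq_zero hQA hx (er.eq_zero_of_neg_epos hsq hneg)

lemma u_half {u : R} (huu : u + u = 1) (x : R) : u * x + u * x = x := by
  rw [← add_mul, huu, one_mul]

lemma u_comm_epos (hQA : er.HasQA) {u : R} (huE : u ∈ er.E) (huu : u + u = 1)
    {x : R} (hx : x ∈ er.Epos) : u * x = x * u := by
  have huG : u ∈ er.G := er.G_of_epos (er.epos_of_E huE)
  have hxG : x ∈ er.G := er.G_of_epos hx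
  have hsG : u * x + x * u ∈ er.G := by
    have h1 : (u + x)^2 ∈ er.Epos := er.epos_sq (er.G_add huG hxG)
    have h2 : u^2 ∈ er.Epos := er.epos_sq huG
    have h3 : x^2 ∈ er.Epos := er.epos_sq hxG
    have he : u * x + x * u = (u + x)^2 - u^2 - x^2 := by
      simp only [sq]; rw [add_mul, mul_add, mul_add]; abel
    rw [he]
    exact er.G_sub (er.G_sub (er.G_of_epos h1) (er.G_of_epos h2)) (er.G_of_epos h3)
  have e1 : u * x + u * x = x := u_half huu x
  have key : u * x + x * u = x := by
    have hd : (u * x + x * u - x) + (u * x + x * u - x) = 0 := by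
      have e2 : x * u + x * u = x := by rw [← mul_add, huu, mul_one]
      calc (u * x + x * u - x) + (u * x + x * u - x)
          = ((u * x + u * x) - x) + ((x * u + x * u) - x) := by abel
        _ = 0 := by rw [e1, e2]; abel
    have hG : u * x + x * u - x ∈ er.G := er.G_sub hsG hxG
    exact eq_of_sub_eq_zero (er.eq_zero_of_double hQA hG hd)
  have : u * x + x * u = u * x + u * x := by rw [key, e1]
  exact (add_left_cancel this).symm

lemma u_comm (hQA : er.HasQA) {u : R} (huE : u ∈ er.E) (huu : u + u = 1)
    {x : R} (hx : x ∈ er.G) : u * x = x * u := by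
  obtain ⟨a, ha, b, hb, rfl⟩ := hx
  rw [mul_sub, sub_mul, er.u_comm_epos hQA huE huu ha, er.u_comm_epos hQA huE huu hb]

lemma u_mul_epos (hQA : er.HasQA) {u : R} (huE : u ∈ er.E) (huu : u + u = 1)
    {a : R} (ha : a ∈ er.Epos) : u * a ∈ er.Epos :=
  er.epos_mul (er.epos_of_E huE) ha (er.u_comm_epos hQA huE huu ha)

end ERing

end Helpers2
section Helpers3

variable {R : Type*} [Ring R]

private lemma comm_closure_setup {u g bk : R}
    (h1 : u * g = g * u) (h2 : u * bk = bk * u) (h3 : g * bk = bk * g) :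
    ∀ x ∈ ({u, g, bk} : Set R), ∀ y ∈ ({u, g, bk} : Set R), x * y = y * x := by
  simp only [Set.mem_insert_iff, Set.mem_singleton_iff]
  rintro x (rfl|rfl|rfl) y (rfl|rfl|rfl) <;>
    first | rfl | exact h1 | exact h1.symm | exact h2 | exact h2.symm | exact h3 | exact h3.symm

private lemma sqrt_key1 (u g bk : R) (huu : u + u = 1)
    (h1 : u * g = g * u) (h2 : u * bk = bk * u) (h3 : g * bk = bk * g) :
    1 - (bk + u * (g - bk^2)) = u * ((1 - bk)^2 + (1 - g)) := by
  letI : CommRing (Subring.closure ({u, g, bk} : Set R)) :=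
    Subring.closureCommRingOfComm (comm_closure_setup h1 h2 h3)
  have hu : u ∈ Subring.closure ({u, g, bk} : Set R) := Subring.subset_closure (by simp)
  have hg : g ∈ Subring.closure ({u, g, bk} : Set R) := Subring.subset_closure (by simp)
  have hb : bk ∈ Subring.closure ({u, g, bk} : Set R) := Subring.subset_closure (by simp)
  set U : Subring.closure ({u, g, bk} : Set R) := ⟨u, hu⟩
  set G : Subring.closure ({u, g, bk} : Set R) := ⟨g, hg⟩
  set B : Subring.closure ({u, g, bk} : Set R) := ⟨bk, hb⟩
  have hU : U + U = 1 := Subtype.ext (by push_cast; exact huu)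
  have key : 1 - (B + U * (G - B^2)) = U * ((1 - B)^2 + (1 - G)) := by
    linear_combination (B - 1) * hU
  have := congrArg (Subtype.val) key
  push_cast at this
  exact this

private lemma sqrt_key2 (u g bk : R) (huu : u + u = 1)
    (h1 : u * g = g * u) (h2 : u * bk = bk * u) (h3 : g * bk = bk * g) :
    g - (bk + u * (g - bk^2))^2
      = (g - bk^2) * (1 - bk - u * (u * (g - bk^2))) := by
  letI : CommRing (Subring.closure ({u, g, bk} : Set R)) :=
    Subring.closureCommRingOfComm (comm_closure_setup h1 h2 h3)
  have hu : u ∈ Subring.closure ({u, g, bk} : Set R) := Subring.subset_closure (by simp)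
  have hg : g ∈ Subring.closure ({u, g, bk} : Set R) := Subring.subset_closure (by simp)
  have hb : bk ∈ Subring.closure ({u, g, bk} : Set R) := Subring.subset_closure (by simp)
  set U : Subring.closure ({u, g, bk} : Set R) := ⟨u, hu⟩
  set G : Subring.closure ({u, g, bk} : Set R) := ⟨g, hg⟩
  set B : Subring.closure ({u, g, bk} : Set R) := ⟨bk, hb⟩
  have hU : U + U = 1 := Subtype.ext (by push_cast; exact huu)
  have key : G - (B + U * (G - B^2))^2
      = (G - B^2) * (1 - B - U * (U * (G - B^2))) := by
    linear_combination (-(B * (G - B^2))) * hU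
  have := congrArg (Subtype.val) key
  push_cast at this
  exact this

private lemma sqrt_key3 (s bk : R) (h : s * bk = bk * s) :
    (s - bk) * (s + bk) = s^2 - bk^2 := by
  rw [sub_mul, mul_add, mul_add, ← h, sq, sq]; abel

private lemma sqrt_key4 (s bk : R) (h : s * bk = bk * s) :
    (s - bk) * ((1 - s) + (1 - bk)) = (s - bk) + (s - bk) - (s^2 - bk^2) := by
  rw [sub_mul, mul_add, mul_add, mul_sub, mul_sub, mul_sub, mul_sub, ← h, sq, sq]
  simp only [mul_one]
  abel

end Helpers3
section Core

namespace ERing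

variable {R : Type*} [Ring R] (er : ERing R)

lemma u_mul_G (hQA : er.HasQA) {u : R} (huE : u ∈ er.E) (huu : u + u = 1)
    {x : R} (hx : x ∈ er.G) : u * x ∈ er.G := by
  obtain ⟨a, ha, c, hc, rfl⟩ := hx
  rw [mul_sub]
  exact er.G_sub (er.G_of_epos (er.u_mul_epos hQA huE huu ha))
    (er.G_of_epos (er.u_mul_epos hQA huE huu hc))

private def sqrtSeq (u g : R) : ℕ → R
  | 0 => 0
  | (k+1) => sqrtSeq u g k + u * (g - (sqrtSeq u g k)^2)

lemma sqrt_aux (hQA : er.HasQA) (hCV : er.HasCV) {u : R} (huE : u ∈ er.E) (huu : u + u = 1)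
    {g : R} (hg : g ∈ er.Epos) (hg1 : 1 - g ∈ er.Epos) :
    ∃ s, s ∈ er.Epos ∧ s ^ 2 = g ∧
      ∀ x ∈ er.G, x * g = g * x → x * s = s * x := by
  have hgG : g ∈ er.G := er.G_of_epos hg
  have hug : u * g = g * u := er.u_comm hQA huE huu hgG
  set b : ℕ → R := sqrtSeq u g with hbdef
  have hb0 : b 0 = 0 := rfl
  have hbs : ∀ k, b (k+1) = b k + u * (g - (b k)^2) := fun k => rfl
  -- commutation with the whole sequence
  have hcommb : ∀ x : R, x * g = g * x → x * u = u * x → ∀ k, x * b k = b k * x := by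
    intro x hxg hxu k
    induction k with
    | zero => rw [hb0, mul_zero, zero_mul]
    | succ k ih =>
      rw [hbs]
      have hsq : x * (b k)^2 = (b k)^2 * x := by
        rw [sq, ← mul_assoc, ih, mul_assoc, ih, ← mul_assoc]
      have hy : x * (g - (b k)^2) = (g - (b k)^2) * x := by
        rw [mul_sub, sub_mul, hxg, hsq]
      rw [mul_add, add_mul, ih, ← mul_assoc, hxu, mul_assoc, hy, ← mul_assoc]
  have hbu : ∀ k, u * b k = b k * u := fun k => hcommb u hug rfl k
  have hbg : ∀ k, g * b k = b k * g := fun k => hcommb g rfl hug.symm k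
  -- positivity invariants
  have hpos : ∀ k, b k ∈ er.Epos ∧ (1 - b k) ∈ er.Epos ∧ (g - (b k)^2) ∈ er.Epos := by
    intro k
    induction k with
    | zero =>
      refine ⟨by rw [hb0]; exact er.epos_zero, ?_, ?_⟩
      · rw [hb0, sub_zero]; exact er.epos_one
      · rw [hb0]; simpa using hg
    | succ k ih =>
      obtain ⟨hbE, hb1, hd⟩ := ih
      have hub : u * b k = b k * u := hbu k
      have hgb : g * b k = b k * g := hbg k
      have h1' : b (k+1) ∈ er.Epos := by
        rw [hbs]; exact er.epos_add hbE (er.u_mul_epos hQA huE huu hd)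
      have h2' : 1 - b (k+1) ∈ er.Epos := by
        rw [hbs, sqrt_key1 u g (b k) huu hug hub hgb]
        exact er.u_mul_epos hQA huE huu (er.epos_add (er.epos_vi 1 er.epos_one (b k) hbE) hg1)
      have h3' : g - (b (k+1))^2 ∈ er.Epos := by
        rw [hbs, sqrt_key2 u g (b k) huu hug hub hgb]
        have hfE : 1 - b k - u * (u * (g - (b k)^2)) ∈ er.Epos := by
          have e : 1 - b k - u * (u * (g - (b k)^2))
              = (1 - (b k + u * (g - (b k)^2))) + u * (u * (g - (b k)^2)) := by
            set X := u * (u * (g - (b k)^2)) with hX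
            have h2 : X + X = u * (g - (b k)^2) := u_half huu _
            rw [← h2]; abel
          rw [e, ← hbs]
          exact er.epos_add h2' (er.u_mul_epos hQA huE huu (er.u_mul_epos hQA huE huu hd))
        have cgb' : Commute g (b k) := hgb
        have cgu' : Commute g u := hug.symm
        have cbu' : Commute (b k) u := hub.symm
        have cdb : Commute (g - (b k)^2) (b k) :=
          cgb'.sub_left ((Commute.refl (b k)).pow_left 2)
        have cdu : Commute (g - (b k)^2) u :=
          cgu'.sub_left (cbu'.pow_left 2)
        have cc : Commute (g - (b k)^2) (1 - b k - u * (u * (g - (b k)^2))) :=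
          ((Commute.one_right _).sub_right cdb).sub_right
            (cdu.mul_right (cdu.mul_right (Commute.refl _)))
        exact er.epos_mul hd hfE cc.eq
      exact ⟨h1', h2', h3'⟩
  have hmono : ∀ k, er.le (b k) (b (k+1)) := by
    intro k
    apply er.le_of_epos
    have e : b (k+1) - b k = u * (g - (b k)^2) := by rw [hbs]; abel
    rw [e]; exact er.u_mul_epos hQA huE huu (hpos k).2.2
  have hbG : ∀ k, b k ∈ er.G := fun k => er.G_of_epos (hpos k).1
  have hpair : ∀ m n, b m * b n = b n * b m :=
    fun m n => hcommb (b m) (hbg m).symm (hbu m).symm n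
  have hbdd : ∃ c ∈ er.G, ∀ n, er.le (b n) c :=
    ⟨1, er.G_one, fun n => er.le_of_epos (by simpa using (hpos n).2.1)⟩
  obtain ⟨s, hsup, hscc⟩ := hCV b hbG hmono hpair hbdd
  obtain ⟨hsG, hub', hlub⟩ := hsup
  have hubk : ∀ k, s - b k ∈ er.Epos := fun k => er.epos_of_le (hub' _ ⟨k, rfl⟩)
  have hsE : s ∈ er.Epos := by have := hubk 0; rwa [hb0, sub_zero] at this
  have hs1 : 1 - s ∈ er.Epos :=
    er.epos_of_le (hlub 1 er.G_one (by rintro a ⟨k, rfl⟩; exact er.le_of_epos (hpos k).2.1))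
  obtain ⟨hsG', hscomm⟩ := hscc
  have hs_of : ∀ x ∈ er.G, (∀ k, x * b k = b k * x) → s * x = x * s := by
    intro x hxG hxb
    exact hscomm x ⟨hxG, by rintro a ⟨k, rfl⟩; exact hxb k⟩
  have hsu : s * u = u * s :=
    hs_of u (er.G_of_epos (er.epos_of_E huE)) (fun k => hbu k)
  have hsg : s * g = g * s := hs_of g hgG (fun k => hbg k)
  have hsb : ∀ k, s * b k = b k * s := fun k => hs_of (b k) (hbG k) (fun j => hpair k j)
  have hs2E : s^2 ∈ er.Epos := er.epos_sq (er.G_of_epos hsE)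
  have hdG : g - s^2 ∈ er.G := er.G_sub hgG (er.G_of_epos hs2E)
  have hA : ∀ k, s^2 - (b k)^2 ∈ er.Epos := by
    intro k
    have cbs : Commute (b k) s := (hsb k).symm
    have csb : Commute s (b k) := hsb k
    have c : Commute (s - b k) (s + b k) :=
      ((Commute.refl s).add_right csb).sub_left
        (cbs.add_right (Commute.refl (b k)))
    have hprod : (s - b k) * (s + b k) ∈ er.Epos :=
      er.epos_mul (hubk k) (er.epos_add hsE (hpos k).1) c.eq
    rwa [sqrt_key3 s (b k) (hsb k)] at hprod
  have hB : ∀ k, (s - b k) + (s - b k) - (s^2 - (b k)^2) ∈ er.Epos := by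
    intro k
    have cbs : Commute (b k) s := (hsb k).symm
    have csb : Commute s (b k) := hsb k
    have c1 : Commute (s - b k) (1 - s) :=
      ((Commute.one_right s).sub_right (Commute.refl s)).sub_left
        ((Commute.one_right (b k)).sub_right cbs)
    have c2 : Commute (s - b k) (1 - b k) :=
      ((Commute.one_right s).sub_right csb).sub_left
        ((Commute.one_right (b k)).sub_right (Commute.refl (b k)))
    have hprod : (s - b k) * ((1 - s) + (1 - b k)) ∈ er.Epos :=
      er.epos_mul (hubk k) (er.epos_add hs1 (hpos k).2.1) (c1.add_right c2).eq
    rwa [sqrt_key4 s (b k) (hsb k)] at hprod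
  have neg_part : -(u * (g - s^2)) ∈ er.Epos := by
    have hb' : ∀ k, er.le (b k) (s - u * (g - s^2)) := by
      intro k
      apply er.le_of_epos
      have e : s - u * (g - s^2) - b k
          = (s - b (k+1)) + u * (s^2 - (b k)^2) := by
        rw [hbs]; noncomm_ring
      rw [e]
      exact er.epos_add (hubk (k+1)) (er.u_mul_epos hQA huE huu (hA k))
    have hG' : s - u * (g - s^2) ∈ er.G :=
      er.G_sub hsG (er.u_mul_G hQA huE huu hdG)
    have h := er.epos_of_le (hlub _ hG' (by rintro a ⟨k, rfl⟩; exact hb' k))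
    rwa [show s - u * (g - s^2) - s = -(u * (g - s^2)) from by abel] at h
  have pos_part : u * (g - s^2) ∈ er.Epos := by
    have hb' : ∀ k, er.le (b k) (s + u * (g - s^2)) := by
      intro k
      apply er.le_of_epos
      have t1 : u * ((s - b k) + (s - b k) - (s^2 - (b k)^2)) ∈ er.Epos :=
        er.u_mul_epos hQA huE huu (hB k)
      have t2 : u * ((s - b k) + (s - b k) - (s^2 - (b k)^2))
          = (s - b k) - u * (s^2 - (b k)^2) := by
        rw [mul_sub, mul_add, u_half huu (s - b k)]
      have e : s + u * (g - s^2) - b k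
          = ((s - b k) - u * (s^2 - (b k)^2)) + u * (g - (b k)^2) := by
        noncomm_ring
      rw [e, ← t2]
      exact er.epos_add t1 (er.u_mul_epos hQA huE huu (hpos k).2.2)
    have hG' : s + u * (g - s^2) ∈ er.G :=
      er.G_add hsG (er.u_mul_G hQA huE huu hdG)
    have h := er.epos_of_le (hlub _ hG' (by rintro a ⟨k, rfl⟩; exact hb' k))
    rwa [add_sub_cancel_left] at h
  have hud0 : u * (g - s^2) = 0 := er.eq_zero_of_neg_epos pos_part neg_part
  have hd0 : g - s^2 = 0 := by
    have h := u_half huu (g - s^2)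
    rw [hud0, add_zero] at h
    exact h.symm
  refine ⟨s, hsE, (sub_eq_zero.mp hd0).symm, ?_⟩
  intro x hxG hxg
  have hxu : x * u = u * x := (er.u_comm hQA huE huu hxG).symm
  exact (hs_of x hxG (fun k => hcommb x hxg hxu k)).symm

end ERing

end Core
section Final

namespace ERing

variable {R : Type*} [Ring R] (er : ERing R)

lemma exists_nat_bound {x : R} (hx : x ∈ er.Epos) : ∃ n : ℕ, (n : R) - x ∈ er.Epos := by
  induction hx using AddSubmonoid.closure_induction with
  | mem e he => exact ⟨1, by simpa using er.epos_of_E (er.compl_mem e he)⟩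
  | zero => exact ⟨0, by simpa using er.epos_zero⟩
  | add a c ha hc iha ihc =>
    obtain ⟨n, hn⟩ := iha
    obtain ⟨m, hm⟩ := ihc
    refine ⟨n + m, ?_⟩
    have e : ((n + m : ℕ) : R) - (a + c) = ((n : R) - a) + ((m : R) - c) := by
      push_cast; abel
    rw [e]; exact er.epos_add hn hm

lemma upow_mul_epos (hQA : er.HasQA) {u : R} (huE : u ∈ er.E) (huu : u + u = 1)
    (k : ℕ) {x : R} (hx : x ∈ er.Epos) : u ^ k * x ∈ er.Epos := by
  induction k generalizing x with
  | zero => simpa using hx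
  | succ k ih =>
    rw [pow_succ, mul_assoc]
    exact ih (er.u_mul_epos hQA huE huu hx)

end ERing

private lemma comm_two {R : Type*} [Ring R] (x : R) : Commute (2 : R) x := by
  rw [show (2:R) = 1 + 1 by norm_num]
  exact (Commute.one_left x).add_left (Commute.one_left x)

private lemma upow_two_pow {R : Type*} [Ring R] {u : R} (huu : u + u = 1) (k : ℕ) :
    u ^ k * (2 : R) ^ k = 1 := by
  have hu2 : u * (2 : R) = 1 := by
    rw [show (2:R) = 1 + 1 by norm_num, mul_add, mul_one]; exact huu
  have c2 : Commute u (2 : R) := (comm_two u).symm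
  calc u ^ k * (2:R) ^ k = (u * 2) ^ k := (c2.mul_pow k).symm
  _ = 1 := by rw [hu2, one_pow]

theorem stmt2' {R : Type*} [Ring R] (er : ERing R) (hAH : er.IsAH)
    (g : R) (hg : g ∈ er.G) (hg0 : er.le 0 g) :
    ∃ r, (r ∈ er.G ∧ er.le 0 r ∧ r ^ 2 = g) ∧ r ∈ er.CC {g} ∧
      ∀ r', r' ∈ er.G → er.le 0 r' → r' ^ 2 = g → r' = r := by
  obtain ⟨⟨u, huE, huu⟩, hQA, hCV⟩ := hAH
  have hgE : g ∈ er.Epos := by simpa [ERing.le] using hg0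
  -- scaling
  obtain ⟨n, hn⟩ := er.exists_nat_bound hgE
  have hle : n ≤ 2 ^ (2 * n) :=
    le_trans (Nat.lt_two_pow_self (n := n)).le (Nat.pow_le_pow_right (by norm_num) (by omega))
  have hgN : (2:R) ^ (2*n) - g ∈ er.Epos := by
    have e : (2:R) ^ (2*n) - g = ((2 ^ (2*n) - n : ℕ) : R) + ((n : R) - g) := by
      rw [Nat.cast_sub hle]; push_cast; abel
    rw [e]; exact er.epos_add (er.epos_natCast _) hn
  have hg'E : u ^ (2*n) * g ∈ er.Epos := er.upow_mul_epos hQA huE huu _ hgE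
  have hg'1 : 1 - u ^ (2*n) * g ∈ er.Epos := by
    have e : (1:R) - u ^ (2*n) * g = u ^ (2*n) * ((2:R) ^ (2*n) - g) := by
      rw [mul_sub, upow_two_pow huu]
    rw [e]; exact er.upow_mul_epos hQA huE huu _ hgN
  obtain ⟨s, hsE, hs2, hscomm⟩ := er.sqrt_aux hQA hCV huE huu hg'E hg'1
  set r := (2:R) ^ n * s with hrdef
  have c2s : Commute ((2:R) ^ n) s := (comm_two s).pow_left n
  have hrE : r ∈ er.Epos := by
    have h2E : (2:R) ^ n ∈ er.Epos := by
      rw [show (2:R)^n = ((2^n : ℕ) : R) by push_cast; ring_nf]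
      exact er.epos_natCast _
    exact er.epos_mul h2E hsE c2s.eq
  have hrG : r ∈ er.G := er.G_of_epos hrE
  have hr0 : er.le 0 r := by simpa [ERing.le] using hrE
  have hr2 : r ^ 2 = g := by
    have e1 : r ^ 2 = ((2:R) ^ n) ^ 2 * s ^ 2 := c2s.mul_pow 2
    rw [e1, ← pow_mul, Nat.mul_comm n 2, hs2, ← mul_assoc,
      (comm_two u).pow_pow (2*n) (2*n) , upow_two_pow huu, one_mul]
  -- double commutant
  have hrCC : r ∈ er.CC {g} := by
    refine ⟨hrG, ?_⟩
    rintro x ⟨hxG, hx⟩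
    have hxg : x * g = g * x := hx g rfl
    have cxu : Commute x u := (er.u_comm hQA huE huu hxG).symm
    have hxg' : x * (u ^ (2*n) * g) = (u ^ (2*n) * g) * x :=
      ((cxu.pow_right (2*n)).mul_right (hxg : Commute x g)).eq
    have hxs : x * s = s * x := hscomm x hxG hxg'
    have cxr : Commute x r := ((comm_two x).symm.pow_right n).mul_right (hxs : Commute x s)
    exact cxr.eq.symm
  refine ⟨r, ⟨hrG, hr0, hr2⟩, hrCC, ?_⟩
  -- uniqueness
  intro r' hr'G hr'0 hr'2
  have hr'E : r' ∈ er.Epos := by simpa [ERing.le] using hr'0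
  have hr'g : r' * g = g * r' := by
    rw [← hr'2]; exact ((Commute.refl r').pow_right 2).eq
  have hc : r * r' = r' * r := hrCC.2 r' ⟨hr'G, by rintro a rfl; exact hr'g⟩
  have cac : Commute r' r := hc.symm
  set w := r' - r with hwdef
  have hxE : w ^ 2 ∈ er.Epos := er.epos_vi r' hr'E r hrE
  have cwa : Commute (w ^ 2) r' := ((Commute.refl r').sub_left cac.symm).pow_left 2
  have cwc : Commute (w ^ 2) r := (cac.sub_left (Commute.refl r)).pow_left 2
  have h0 : w * (r' + r) = 0 := by
    rw [hwdef, sub_mul, mul_add, mul_add, ← sq, ← sq, hr'2, hr2, cac.eq]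
    abel
  have hx0 : w ^ 2 * (r' + r) = 0 := by
    rw [sq, mul_assoc, h0, mul_zero]
  have hxa : w ^ 2 * r' ∈ er.Epos := er.epos_mul hxE hr'E cwa.eq
  have hxc : w ^ 2 * r ∈ er.Epos := er.epos_mul hxE hrE cwc.eq
  have sum0 : w ^ 2 * r' + w ^ 2 * r = 0 := by rw [← mul_add, hx0]
  have hxa0 : w ^ 2 * r' = 0 := by
    refine er.eq_zero_of_neg_epos hxa ?_
    rw [neg_eq_of_add_eq_zero_right sum0]
    exact hxc
  have hxc0 : w ^ 2 * r = 0 := by rwa [hxa0, zero_add] at sum0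
  have hw3 : w ^ 2 * w = 0 := by
    rw [hwdef, mul_sub]
    rw [← hwdef, hxa0, hxc0, sub_zero]
  have h4 : w * w ^ 2 * w = 0 := by
    rw [((Commute.refl w).pow_right 2).eq, hw3, zero_mul]
  have hwG : w ∈ er.G := er.G_sub hr'G hrG
  have hww : w * w = 0 := (hQA w hwG w hwG h4).1
  have hw0 : w = 0 := er.eq_zero_of_sq_eq_zero hQA hwG (by rw [sq]; exact hww)
  exact sub_eq_zero.mp hw0

end Final

/-- In an AH-algebra, every `0 ≤ g ∈ G` has a unique square root
`g^(1/2) ∈ G` with `0 ≤ g^(1/2)` and `(g^(1/2))² = g`; moreover `g^(1/2) ∈ CC(g)`. -/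
theorem stmt2 {R : Type*} [Ring R] (er : ERing R) (hAH : er.IsAH)
    (g : R) (hg : g ∈ er.G) (hg0 : er.le 0 g) :
    ∃ r, (r ∈ er.G ∧ er.le 0 r ∧ r ^ 2 = g) ∧ r ∈ er.CC {g} ∧
      ∀ r', r' ∈ er.G → er.le 0 r' → r' ^ 2 = g → r' = r := by
  exact stmt2' er hAH g hg hg0
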